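/- arXiv:1711.06194 — 2 statements merged into one kernel-verified Lean document; each statement's English description precedes it below -/
import Mathlib

section
/- If Z = R Rᵀ with R of full column rank m, S is symmetric m×m with largest eigenvalue λ > 0, and ω = −1/λ, then rank(R (I + ω S) Rᵀ) = rank(I + ω S) < m = rank(Z). That is, the update Z ← Z + ω·R S Rᵀ strictly decreases the rank. -/
open Matrix

lemma aux_rank_lt_of_ker (m : ℕ) (A : Matrix (Fin m) (Fin m) ℝ)
    (v : Fin m → ℝ) (hv : v ≠ 0) (h0 : A.mulVec v = 0) : A.rank < m := by
  have hle : A.rank ≤ m := by simpa using A.rank_le_card_width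
  rcases lt_or_eq_of_le hle with h | h
  · exact h
  · exfalso
    have hrn := LinearMap.finrank_range_add_finrank_ker A.mulVecLin
    rw [show Module.finrank ℝ (LinearMap.range A.mulVecLin) = A.rank from rfl, h] at hrn
    simp only [Module.finrank_pi, Fintype.card_fin] at hrn
    have hker : LinearMap.ker A.mulVecLin = ⊥ :=
      Submodule.finrank_eq_zero.mp (by omega)
    have : v ∈ LinearMap.ker A.mulVecLin := by
      simpa [Matrix.mulVecLin_apply] using h0
    rw [hker] at this
    exact hv (by simpa using this)

lemma aux_rank_conj (n m : ℕ) (R : Matrix (Fin n) (Fin m) ℝ)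
    (hR : R.rank = m) (A : Matrix (Fin m) (Fin m) ℝ) :
    (R * A * Rᵀ).rank = A.rank := by
  -- Rᵀ.mulVecLin is surjective
  have hsurj : LinearMap.range (Rᵀ.mulVecLin) = ⊤ := by
    apply Submodule.eq_top_of_finrank_eq
    rw [show Module.finrank ℝ (LinearMap.range Rᵀ.mulVecLin) = Rᵀ.rank from rfl,
      Matrix.rank_transpose, hR]
    simp
  -- R.mulVecLin is injective
  have hinj : Function.Injective R.mulVecLin := by
    rw [← LinearMap.ker_eq_bot]
    have hrn := LinearMap.finrank_range_add_finrank_ker R.mulVecLin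
    rw [show Module.finrank ℝ (LinearMap.range R.mulVecLin) = R.rank from rfl, hR] at hrn
    simp only [Module.finrank_pi, Fintype.card_fin] at hrn
    exact Submodule.finrank_eq_zero.mp (by omega)
  rw [Matrix.rank, Matrix.rank, Matrix.mulVecLin_mul, Matrix.mulVecLin_mul,
    LinearMap.range_comp_of_range_eq_top _ hsurj, LinearMap.range_comp]
  exact (LinearEquiv.finrank_eq
    (Submodule.equivMapOfInjective R.mulVecLin hinj _)).symm

/-- With R of full column rank m and ω = −1/λ_max(S), the update strictly
decreases the rank: rank(R (I + ωS) Rᵀ) = rank(I + ωS) < m = rank(R Rᵀ). -/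
theorem rank_strict_decrease (n m : ℕ) (R : Matrix (Fin n) (Fin m) ℝ)
    (hR : R.rank = m) (S : Matrix (Fin m) (Fin m) ℝ) (hS : S.IsSymm)
    (lam : ℝ) (hlam : 0 < lam)
    (hev : ∃ v : Fin m → ℝ, v ≠ 0 ∧ S.mulVec v = lam • v)
    (hmax : ∀ (μ : ℝ) (v : Fin m → ℝ), v ≠ 0 → S.mulVec v = μ • v → μ ≤ lam)
    (ω : ℝ) (hω : ω = -1 / lam) :
    (R * (1 + ω • S) * Rᵀ).rank = (1 + ω • S).rank ∧
    ((1 + ω • S) : Matrix (Fin m) (Fin m) ℝ).rank < m ∧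
    (R * Rᵀ).rank = m := by
  refine ⟨aux_rank_conj n m R hR _, ?_, ?_⟩
  · obtain ⟨v, hv, hev⟩ := hev
    apply aux_rank_lt_of_ker m _ v hv
    have : (1 + ω • S).mulVec v = v + ω • (S.mulVec v) := by
      rw [Matrix.add_mulVec, Matrix.one_mulVec, Matrix.smul_mulVec]
    rw [this, hev, smul_smul, hω]
    have : -1 / lam * lam = -1 := by field_simp
    rw [this]
    simp
  · rw [Matrix.rank_self_mul_transpose, hR]
end

section
/- (Barvinok-type bound specialization) Any SDP with k linear equality constraints that has a feasible PSD solution admits a feasible PSD solution of rank r with r(r+1)/2 ≤ k — stated for the case k = 1: if there exists a PSD matrix X with ⟨A, X⟩ = a, then there exists a PSD matrix X' of rank at most 1 with ⟨A, X'⟩ = a. -/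
open Matrix in
lemma outer_self_posSemidef {n : ℕ} (w : Fin n → ℝ) :
    (Matrix.vecMulVec w w).PosSemidef := by
  refine Matrix.posSemidef_iff_dotProduct_mulVec.mpr ⟨?_, ?_⟩
  · ext i j
    simp [Matrix.vecMulVec_apply, Matrix.conjTranspose_apply, mul_comm]
  · intro x
    have hmv : (Matrix.vecMulVec w w) *ᵥ x = fun i => w i * (w ⬝ᵥ x) := by
      funext i
      simp [Matrix.mulVec, Matrix.vecMulVec_apply, dotProduct,
        Finset.mul_sum, mul_assoc]
    have : star x ⬝ᵥ (Matrix.vecMulVec w w) *ᵥ x = (w ⬝ᵥ x) * (w ⬝ᵥ x) := by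
      rw [hmv]
      simp only [dotProduct, star_trivial]
      rw [Finset.sum_mul]
      congr 1
      funext i
      ring
    rw [this]
    exact mul_self_nonneg _

open Matrix in
lemma outer_self_rank_le_one {n : ℕ} (w : Fin n → ℝ) :
    (Matrix.vecMulVec w w).rank ≤ 1 := by
  rw [Matrix.vecMulVec_eq (Fin 1)]
  calc (Matrix.replicateCol (Fin 1) w * Matrix.replicateRow (Fin 1) w).rank
      ≤ (Matrix.replicateRow (Fin 1) w).rank := Matrix.rank_mul_le_right _ _
    _ ≤ Fintype.card (Fin 1) := by
        simpa using Matrix.rank_le_card_height (Matrix.replicateRow (Fin 1) w)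
    _ = 1 := by simp

open Matrix in
lemma trace_mul_outer {n : ℕ} (A : Matrix (Fin n) (Fin n) ℝ) (w : Fin n → ℝ) :
    (A * Matrix.vecMulVec w w).trace = w ⬝ᵥ (A *ᵥ w) := by
  simp only [Matrix.trace, Matrix.diag, Matrix.mul_apply, Matrix.vecMulVec_apply,
    dotProduct, Matrix.mulVec, Finset.mul_sum]
  refine Finset.sum_congr rfl fun p _ => Finset.sum_congr rfl fun q _ => by ring

/-- Barvinok-type bound for one linear constraint: if some PSD X satisfies
⟨A, X⟩ = a, then some PSD X' of rank at most 1 does too. -/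
theorem barvinok_one_constraint (n : ℕ) (A : Matrix (Fin n) (Fin n) ℝ)
    (hA : A.IsSymm) (a : ℝ)
    (h : ∃ X : Matrix (Fin n) (Fin n) ℝ, X.PosSemidef ∧ (A * X).trace = a) :
    ∃ X' : Matrix (Fin n) (Fin n) ℝ, X'.PosSemidef ∧ X'.rank ≤ 1 ∧
      (A * X').trace = a := by
  obtain ⟨X, hX, hTr⟩ := h
  by_cases ha : a = 0
  · refine ⟨0, Matrix.PosSemidef.zero, ?_, ?_⟩
    · simp [Matrix.rank_zero]
    · simp [ha]
  · -- decompose X = Bᴴ * B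
    obtain ⟨B, rfl⟩ := (show ∃ B : Matrix (Fin n) (Fin n) ℝ, X = B.conjTranspose * B by
      open MatrixOrder in exact CStarAlgebra.nonneg_iff_eq_star_mul_self.mp hX.nonneg)
    -- a = Σ i, f i where f i = rowᵢ(B)ᵀ A rowᵢ(B)
    set f : Fin n → ℝ := fun i => dotProduct (fun j => B i j) (A.mulVec fun j => B i j) with hf
    have hsum : ∑ i, f i = a := by
      rw [← hTr]
      have : (A * (B.conjTranspose * B)).trace = (B * A * B.conjTranspose).trace := by
        rw [← Matrix.mul_assoc, Matrix.trace_mul_comm, Matrix.mul_assoc]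
      rw [this]
      simp only [Matrix.trace, Matrix.diag, Matrix.mul_apply,
        Matrix.conjTranspose_apply, star_trivial, hf, dotProduct,
        Matrix.mulVec, Finset.sum_mul, Finset.mul_sum]
      congr 1
      funext i
      rw [Finset.sum_comm]
      congr 1
      funext j
      congr 1
      funext k
      ring
    -- find an index whose term has the same sign as a
    have hex : ∃ i, 0 < a / f i := by
      rcases lt_or_gt_of_ne ha with hneg | hpos
      · by_contra hc
        push_neg at hc
        have : ∀ i ∈ Finset.univ, (0:ℝ) ≤ f i := by
          intro i _
          by_contra hfi
          push_neg at hfi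
          exact absurd (div_pos_of_neg_of_neg hneg hfi) (not_lt.mpr (hc i))
        have := Finset.sum_nonneg this
        rw [hsum] at this
        exact absurd hneg (not_lt.mpr this)
      · by_contra hc
        push_neg at hc
        have : ∀ i ∈ Finset.univ, f i ≤ (0:ℝ) := by
          intro i _
          by_contra hfi
          push_neg at hfi
          exact absurd (div_pos hpos hfi) (not_lt.mpr (hc i))
        have := Finset.sum_nonpos this
        rw [hsum] at this
        exact absurd hpos (not_lt.mpr this)
    obtain ⟨i, hi⟩ := hex
    have hfi : f i ≠ 0 := by
      intro h0
      rw [h0, div_zero] at hi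
      exact lt_irrefl 0 hi
    obtain ⟨c, hcpos, hca⟩ : ∃ c : ℝ, 0 < c ∧ c * f i = a :=
      ⟨a / f i, hi, div_mul_cancel₀ _ hfi⟩
    set w : Fin n → ℝ := fun j => Real.sqrt c * B i j with hw
    refine ⟨Matrix.vecMulVec w w, outer_self_posSemidef w, outer_self_rank_le_one w, ?_⟩
    rw [trace_mul_outer]
    show dotProduct w (A.mulVec w) = a
    have hqw : dotProduct w (A.mulVec w) = c * f i := by
      have hsq : Real.sqrt c * Real.sqrt c = c := Real.mul_self_sqrt (le_of_lt hcpos)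
      simp only [hw, hf, dotProduct, Matrix.mulVec, Finset.mul_sum]
      refine Finset.sum_congr rfl fun p _ => Finset.sum_congr rfl fun q _ => ?_
      conv_rhs => rw [← hsq]
      ring
    rw [hqw, hca]
end
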